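/- arXiv:1312.6915 — 2 statements merged into one kernel-verified Lean document; each statement's English description precedes it below -/
import Mathlib

section
/- Let p be a prime and 2 ≤ a ≤ p − 1. In the linear Alexander quandle X = Λ_p/(t − a), the isotropy subgroup of Inn(X) at 0 is exactly the cyclic group ⟨s_0⟩ generated by s_0 (where s_0(y) = a·y). -/
/-- A quandle given by a family of permutations `s x` satisfying
`s x x = x` and `s x ∘ s y = s (s x y) ∘ s x`. -/
structure SQuandle (X : Type*) where
  s : X → Equiv.Perm X
  fix : ∀ x, s x x = x
  dist : ∀ x y, s x * s y = s (s x y) * s x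

/-- The inner automorphism group: the subgroup of permutations generated by the `s x`. -/
def Inn {X : Type*} (s : X → Equiv.Perm X) : Subgroup (Equiv.Perm X) :=
  Subgroup.closure (Set.range s)

/-- Two-point homogeneity with respect to the inner automorphism group. -/
def TwoPointHomogeneous {X : Type*} (s : X → Equiv.Perm X) : Prop :=
  ∀ x₁ x₂ y₁ y₂ : X, x₁ ≠ x₂ → y₁ ≠ y₂ →
    ∃ f ∈ Inn s, f x₁ = y₁ ∧ f x₂ = y₂

/-- Connectedness: the inner automorphism group acts transitively. -/
def QConnected {X : Type*} (s : X → Equiv.Perm X) : Prop :=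
  ∀ x y : X, ∃ f ∈ Inn s, f x = y

/-- Cyclic type: each `s x` acts on `X \ {x}` as a single cycle of order `#X - 1`,
i.e. `s x` is a cycle whose support is the complement of `{x}`. -/
def CyclicType {X : Type*} [Fintype X] [DecidableEq X] (s : X → Equiv.Perm X) : Prop :=
  ∀ x : X, (s x).IsCycle ∧ (s x).support = {x}ᶜ

/-- The symmetry `y ↦ a*y + (1-a)*x` of the linear Alexander quandle
`Λ_p/(t-a)` on `ZMod p` (`p` prime, `a ≠ 0`). -/
def alexS (p : ℕ) [Fact p.Prime] (a : ZMod p) (ha : a ≠ 0) (x : ZMod p) :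
    Equiv.Perm (ZMod p) where
  toFun y := a * y + (1 - a) * x
  invFun y := a⁻¹ * (y - (1 - a) * x)
  left_inv y := by field_simp; ring
  right_inv y := by field_simp; ring


lemma alexS_apply (p : ℕ) [Fact p.Prime] (a : ZMod p) (ha : a ≠ 0) (x y : ZMod p) :
    alexS p a ha x y = a * y + (1 - a) * x := rfl

lemma alexS_zero_zpow (p : ℕ) [Fact p.Prime] (a : ZMod p) (ha : a ≠ 0) (k : ℤ) :
    ∀ y, ((alexS p a ha 0) ^ k) y = a ^ k * y := by
  have hinv : ∀ y, (alexS p a ha 0)⁻¹ y = a⁻¹ * y := by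
    intro y
    have : alexS p a ha 0 (a⁻¹ * y) = y := by
      rw [alexS_apply]; field_simp; ring
    calc (alexS p a ha 0)⁻¹ y = (alexS p a ha 0)⁻¹ (alexS p a ha 0 (a⁻¹ * y)) := by rw [this]
    _ = a⁻¹ * y := by simp
  induction k using Int.induction_on with
  | zero => simp
  | succ n ih =>
      intro y
      rw [zpow_add_one, Equiv.Perm.mul_apply, ih, alexS_apply, zpow_add₀ ha, zpow_one]
      ring
  | pred n ih =>
      intro y
      rw [zpow_sub_one, Equiv.Perm.mul_apply, hinv, ih]
      rw [zpow_sub_one₀ ha]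
      ring

lemma alex_affine (p : ℕ) [Fact p.Prime] (a : ZMod p) (ha : a ≠ 0)
    (f : Equiv.Perm (ZMod p)) (hf : f ∈ Inn (alexS p a ha)) :
    ∃ k : ℤ, ∀ y, f y = a ^ k * y + f 0 := by
  induction hf using Subgroup.closure_induction with
  | mem g hg =>
      obtain ⟨x, rfl⟩ := hg
      exact ⟨1, fun y => by rw [alexS_apply, alexS_apply, zpow_one]; ring⟩
  | one => exact ⟨0, fun y => by simp⟩
  | mul g h _ _ ihg ihh =>
      obtain ⟨k, hk⟩ := ihg
      obtain ⟨l, hl⟩ := ihh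
      refine ⟨k + l, fun y => ?_⟩
      rw [Equiv.Perm.mul_apply, Equiv.Perm.mul_apply, hk (h y), hl y, hk (h 0), zpow_add₀ ha]
      ring
  | inv g _ ihg =>
      obtain ⟨k, hk⟩ := ihg
      refine ⟨-k, fun y => ?_⟩
      have h1 : g (g⁻¹ y) = y := by simp
      have h2 : g (g⁻¹ 0) = 0 := by simp
      rw [hk] at h1 h2
      have : a ^ (-k) * (a ^ k * g⁻¹ y + g 0) = a ^ (-k) * (a ^ k * g⁻¹ 0 + g 0) + a^(-k) * (y - 0) := by
        rw [h1, h2]; ring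
      have hne : (a : ZMod p) ^ k ≠ 0 := zpow_ne_zero _ ha
      field_simp [zpow_neg] at this ⊢
      have e : a ^ (-k) * a ^ k = 1 := by rw [zpow_neg, inv_mul_cancel₀ hne]
      linear_combination a ^ (-k) * (h1 - h2) - (g⁻¹ y - g⁻¹ 0) * e

/-- the isotropy subgroup of `Inn(Λ_p/(t-a))` at `0` is exactly
the cyclic group generated by `s 0`. -/
theorem alex_isotropy_at_zero (p : ℕ) [Fact p.Prime] (a : ZMod p)
    (ha : a ≠ 0) (ha1 : a ≠ 1) :
    ∀ f : Equiv.Perm (ZMod p),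
      (f ∈ Inn (alexS p a ha) ∧ f 0 = 0) ↔
        f ∈ Subgroup.zpowers (alexS p a ha 0) := by

  intro f
  constructor
  · rintro ⟨hf, h0⟩
    obtain ⟨k, hk⟩ := alex_affine p a ha f hf
    refine ⟨k, ?_⟩
    ext y
    rw [alexS_zero_zpow, hk, h0, add_zero]
  · rintro ⟨k, rfl⟩
    constructor
    · exact Subgroup.zpow_mem _ (Subgroup.subset_closure (Set.mem_range_self 0)) k
    · rw [alexS_zero_zpow]; ring
end

section
/- Let p ≥ 3 be prime and 2 ≤ a ≤ p − 1. The linear Alexander quandle Λ_p/(t − a) is of cyclic type if and only if a is a primitive root modulo p (i.e., a generates the multiplicative group (ℤ/pℤ)^×). -/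
lemma alexS_pow (p : ℕ) [Fact p.Prime] (a : ZMod p) (ha : a ≠ 0) (x : ZMod p) (n : ℕ)
    (y : ZMod p) : ((alexS p a ha x) ^ n) y = a ^ n * (y - x) + x := by
  induction n with
  | zero => simp
  | succ n ih =>
    rw [pow_succ', Equiv.Perm.mul_apply, ih, alexS_apply]
    ring

lemma alexS_ne_iff (p : ℕ) [Fact p.Prime] (a : ZMod p) (ha : a ≠ 0) (ha1 : a ≠ 1)
    (x y : ZMod p) : alexS p a ha x y ≠ y ↔ y ≠ x := by
  rw [alexS_apply, not_iff_not]
  constructor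
  · intro h
    have h2 : (a - 1) * (y - x) = 0 := by linear_combination h
    rcases mul_eq_zero.mp h2 with h3 | h3
    · exact absurd (sub_eq_zero.mp h3) ha1
    · exact sub_eq_zero.mp h3
  · rintro rfl; ring

lemma alexS_support (p : ℕ) [Fact p.Prime] (a : ZMod p) (ha : a ≠ 0) (ha1 : a ≠ 1)
    (x : ZMod p) : (alexS p a ha x).support = {x}ᶜ := by
  ext y
  simp [Equiv.Perm.mem_support, alexS_ne_iff p a ha ha1 x y]

theorem alex_test (p : ℕ) [Fact p.Prime] (hp : 3 ≤ p)
    (a : ZMod p) (ha : a ≠ 0) (ha1 : a ≠ 1) :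
    (∀ x : ZMod p, ((alexS p a ha) x).IsCycle ∧ ((alexS p a ha) x).support = {x}ᶜ)
      ↔ orderOf a = p - 1 := by
  have hcard : Fintype.card (ZMod p)ˣ = p - 1 := ZMod.card_units p
  set u : (ZMod p)ˣ := Units.mk0 a ha with hu
  have hou : orderOf (u : ZMod p) = orderOf u := orderOf_units
  constructor
  · intro h
    obtain ⟨hc, -⟩ := h 0
    obtain ⟨w, hw, -⟩ := id hc
    have hw0 : w ≠ 0 := by
      have := (alexS_ne_iff p a ha ha1 0 w).mp hw; simpa using this
    have h1 : (1 : ZMod p) ≠ 0 := one_ne_zero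
    -- every unit is a power of u
    have hall : ∀ v : (ZMod p)ˣ, v ∈ Subgroup.zpowers u := by
      intro v
      have hv : alexS p a ha 0 v.val ≠ v.val :=
        (alexS_ne_iff p a ha ha1 0 v.val).mpr (by simpa using v.ne_zero)
      have h1' : alexS p a ha 0 (1 : ZMod p) ≠ 1 :=
        (alexS_ne_iff p a ha ha1 0 1).mpr (by simpa using h1)
      obtain ⟨m, hm⟩ := hc.exists_pow_eq h1' hv
      have hm' : a ^ m * ((1 : ZMod p) - 0) + 0 = v.val := by
        rw [← alexS_pow p a ha 0 m 1, hm]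
      have hm'' : a ^ m = v.val := by simpa using hm'
      exact ⟨(m : ℤ), Units.ext (by
        push_cast
        simpa [hu] using hm'')⟩
    have := orderOf_eq_card_of_forall_mem_zpowers hall
    rw [Nat.card_eq_fintype_card, hcard] at this
    rw [← this, ← hou]
    simp [hu]
  · intro hord
    have htop : Subgroup.zpowers u = ⊤ := by
      apply Subgroup.eq_top_of_card_eq
      rw [Nat.card_eq_fintype_card, Nat.card_eq_fintype_card, Fintype.card_zpowers, hcard, ← hord,
        ← hou]
      simp [hu]
    intro x
    refine ⟨?_, alexS_support p a ha ha1 x⟩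
    refine ⟨x + 1, (alexS_ne_iff p a ha ha1 x (x + 1)).mpr (by simp), ?_⟩
    intro z hz
    have hzx : z ≠ x := (alexS_ne_iff p a ha ha1 x z).mp hz
    have hzx0 : z - x ≠ 0 := sub_ne_zero.mpr hzx
    set v : (ZMod p)ˣ := Units.mk0 (z - x) hzx0 with hv
    have : v ∈ Submonoid.powers u := by
      rw [mem_powers_iff_mem_zpowers, htop]; trivial
    obtain ⟨n, hn⟩ := this
    have hn' : a ^ n = z - x := by
      have := congrArg Units.val hn
      push_cast at this
      simpa [hu, hv] using this
    refine ⟨(n : ℤ), ?_⟩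
    rw [zpow_natCast, alexS_pow, hn']
    ring

/-- for `p ≥ 3` prime and `a ≠ 0, 1`, the linear Alexander quandle
`Λ_p/(t-a)` is of cyclic type iff `a` is a primitive root modulo `p`. -/
theorem alex_cyclicType_iff_primitiveRoot (p : ℕ) [Fact p.Prime] (hp : 3 ≤ p)
    (a : ZMod p) (ha : a ≠ 0) (ha1 : a ≠ 1) :
    CyclicType (alexS p a ha) ↔ orderOf a = p - 1 := by
  exact alex_test p hp a ha ha1
end
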